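/- Let n be a positive integer and let a, b, c, d be integers such that a·d − b·c ≡ 1 (mod n), c ≠ 0, and gcd(d, n) = 1. Then there exist integers a', b', d' with a' ≡ a (mod n), b' ≡ b (mod n), d' ≡ d (mod n), and a'·d' − b'·c = 1 (so that the matrix with rows (a', b') and (c, d') lies in SL₂(ℤ)). -/

import Mathlib

/-- Key arithmetic lemma over ℕ: if `d` is coprime to `n`, we can shift `d` by a
multiple of `n` to make it coprime to any nonzero `c`. -/
lemma nat_key (d n c : ℕ) (h : Nat.Coprime d n) (hc : c ≠ 0) :
    ∃ k : ℕ, Nat.Coprime (d + n * k) c := by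
  refine ⟨c / Nat.gcd c (d ^ c), ?_⟩
  set g := Nat.gcd c (d ^ c) with hg
  have hgc : g ∣ c := Nat.gcd_dvd_left _ _
  have hgd : g ∣ d ^ c := Nat.gcd_dvd_right _ _
  have hgne : g ≠ 0 := by
    intro h0
    rw [hg, Nat.gcd_eq_zero_iff] at h0
    exact hc h0.1
  have hkc : c / g ∣ c := Nat.div_dvd_of_dvd hgc
  have hkne : c / g ≠ 0 := by
    intro h0
    exact hc (by simpa [h0] using (Nat.div_mul_cancel hgc).symm)
  by_contra hne
  obtain ⟨p, hp, hpd', hpc⟩ := Nat.Prime.not_coprime_iff_dvd.mp hne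
  have hppr := hp
  by_cases hpd : p ∣ d
  · -- p divides d, hence p does not divide n, and p does not divide c / g
    have hpn : ¬ p ∣ n := by
      intro hpn
      have h1 : p ∣ 1 := h ▸ Nat.dvd_gcd hpd hpn
      exact hp.one_lt.ne' (Nat.eq_one_of_dvd_one h1)
    have hν : p ^ c.factorization p ∣ g := by
      refine Nat.dvd_gcd (Nat.ordProj_dvd c p) ?_
      calc p ^ c.factorization p ∣ p ^ c :=
            pow_dvd_pow p (le_of_lt (Nat.factorization_lt p hc))
        _ ∣ d ^ c := pow_dvd_pow_of_dvd hpd c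
    have hfle : c.factorization p ≤ g.factorization p :=
      (hp.pow_dvd_iff_le_factorization hgne).mp hν
    have hpk : ¬ p ∣ c / g := by
      intro hpk
      have h1 : 1 ≤ (c / g).factorization p :=
        (hp.dvd_iff_one_le_factorization hkne).mp hpk
      rw [Nat.factorization_div hgc] at h1
      simp only [Finsupp.tsub_apply] at h1
      omega
    have : p ∣ n * (c / g) := (Nat.dvd_add_right hpd).mp hpd'
    rcases hp.dvd_mul.mp this with h' | h'
    · exact hpn h'
    · exact hpk h'
  · -- p does not divide d, hence p does not divide g, hence p divides c / g
    have hpg : ¬ p ∣ g := fun h' => hpd (hp.dvd_of_dvd_pow (h'.trans hgd))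
    have hpk : p ∣ c / g := by
      have h1 : 1 ≤ c.factorization p :=
        (hp.dvd_iff_one_le_factorization hc).mp hpc
      have h2 : g.factorization p = 0 := Nat.factorization_eq_zero_of_not_dvd hpg
      refine (hp.dvd_iff_one_le_factorization hkne).mpr ?_
      rw [Nat.factorization_div hgc]
      simp only [Finsupp.tsub_apply]
      omega
    exact hpd ((Nat.dvd_add_right (Dvd.dvd.mul_left hpk n)).mp
      (by rwa [add_comm] at hpd'))

/-- Integer version of the key lemma. -/
lemma int_key (d n c : ℤ) (hn : 0 < n) (h : Int.gcd d n = 1) (hc : c ≠ 0) :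
    ∃ d' : ℤ, d' ≡ d [ZMOD n] ∧ IsCoprime d' c := by
  have hd0 : 0 ≤ d % n := Int.emod_nonneg d hn.ne'
  have hmod : d % n ≡ d [ZMOD n] := Int.emod_emod_of_dvd d dvd_rfl
  have hcop : IsCoprime (d % n) n := by
    have : IsCoprime d n := Int.isCoprime_iff_gcd_eq_one.mpr h
    have heq : d % n = d + n * (-(d / n)) := by
      rw [Int.emod_def]; ring
    rw [heq]
    exact this.add_mul_left_left _
  have hgcd0 : Int.gcd (d % n) n = 1 := Int.isCoprime_iff_gcd_eq_one.mp hcop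
  set D := (d % n).toNat with hD
  set N := n.toNat with hN
  have hDd : (D : ℤ) = d % n := Int.toNat_of_nonneg hd0
  have hNn : (N : ℤ) = n := Int.toNat_of_nonneg hn.le
  have hDN : Nat.Coprime D N := by
    have : Int.gcd (D : ℤ) (N : ℤ) = 1 := by rw [hDd, hNn]; exact hgcd0
    simpa [Int.gcd_natCast_natCast] using this
  obtain ⟨k, hk⟩ := nat_key D N c.natAbs hDN (by simpa using hc)
  refine ⟨d % n + n * (k : ℤ), ?_, ?_⟩
  · exact (Int.ModEq.refl _).add (Int.modEq_zero_iff_dvd.mpr ⟨k, rfl⟩) |>.trans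
      (by simpa using hmod)
  · rw [Int.isCoprime_iff_gcd_eq_one]
    have : d % n + n * (k : ℤ) = ((D + N * k : ℕ) : ℤ) := by
      push_cast [hDd, hNn]; ring
    rw [this, Int.gcd]
    exact hk

/-- Let `n` be a positive integer and `a, b, c, d` integers with
`a·d − b·c ≡ 1 (mod n)`, `c ≠ 0`, and `gcd(d, n) = 1`. Then there exist integers
`a'`, `b'`, `d'` congruent to `a`, `b`, `d` modulo `n` respectively with
`a'·d' − b'·c = 1`, so that `!![a', b'; c, d']` lies in `SL₂(ℤ)`. -/
theorem stmt_1 (n : ℤ) (hn : 0 < n) (a b c d : ℤ)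
    (hdet : a * d - b * c ≡ 1 [ZMOD n]) (hc : c ≠ 0) (hgcd : Int.gcd d n = 1) :
    ∃ a' b' d' : ℤ, a' ≡ a [ZMOD n] ∧ b' ≡ b [ZMOD n] ∧ d' ≡ d [ZMOD n] ∧
      a' * d' - b' * c = 1 := by
  obtain ⟨d', hd'd, hd'c⟩ := int_key d n c hn hgcd hc
  -- d' is coprime to n
  have hd'n : IsCoprime d' n := by
    have hdn : IsCoprime d n := Int.isCoprime_iff_gcd_eq_one.mpr hgcd
    obtain ⟨t, ht⟩ := (Int.modEq_iff_dvd.mp hd'd)  -- d - d' = n * t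
    have : d' = d + n * (-t) := by linarith [ht]
    rw [this]
    exact hdn.add_mul_left_left _
  -- Bezout for d' and c : a0 * d' - b0 * c = 1
  obtain ⟨u, v, huv⟩ := hd'c
  set a0 := u with ha0
  set b0 := -v with hb0
  have hbez : a0 * d' - b0 * c = 1 := by rw [ha0, hb0]; linarith [huv]
  -- Bezout for d' and n : w * d' + z * n = 1
  obtain ⟨w, z, hwz⟩ := hd'n
  have hwmod : d' * w ≡ 1 [ZMOD n] := by
    refine Int.modEq_iff_dvd.mpr ⟨z, by linarith [mul_comm d' w, mul_comm z n]⟩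
  set t := w * (b - b0) with htdef
  have h1 : d' * t ≡ b - b0 [ZMOD n] := by
    calc d' * t = (d' * w) * (b - b0) := by rw [htdef]; ring
      _ ≡ 1 * (b - b0) [ZMOD n] := hwmod.mul_right _
      _ = b - b0 := by ring
  refine ⟨a0 + c * t, b0 + d' * t, d', ?_, ?_, hd'd, by linear_combination hbez⟩
  · -- a' ≡ a, via n ∣ (a0 + c * t - a) * d' and cancelling d'
    have h2 : a * d' ≡ 1 + b * c [ZMOD n] := by
      have : a * d' ≡ a * d [ZMOD n] := hd'd.mul_left a
      calc a * d' ≡ a * d [ZMOD n] := this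
        _ = (a * d - b * c) + b * c := by ring
        _ ≡ 1 + b * c [ZMOD n] := hdet.add_right _
    have h3 : (a0 + c * t - a) * d' ≡ 0 [ZMOD n] := by
      calc (a0 + c * t - a) * d'
          = (a0 * d' - b0 * c) + b0 * c + c * (d' * t) - a * d' := by ring
        _ = 1 + b0 * c + c * (d' * t) - a * d' := by rw [hbez]
        _ ≡ 1 + b0 * c + c * (b - b0) - (1 + b * c) [ZMOD n] :=
            (((Int.ModEq.refl _).add (h1.mul_left c)).sub h2)
        _ = 0 := by ring
    have hdvd : n ∣ (a0 + c * t - a) * d' := (Int.modEq_zero_iff_dvd.mp h3)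
    have hdvd2 : n ∣ (a0 + c * t - a) := by
      have key : a0 + c * t - a = ((a0 + c * t - a) * d') * w + n * (z * (a0 + c * t - a)) := by
        linear_combination (a - a0 - c * t) * hwz
      rw [key]
      exact dvd_add (Dvd.dvd.mul_right hdvd w) (Dvd.intro _ rfl)
    exact Int.modEq_iff_dvd.mpr (by simpa [neg_sub] using dvd_neg.mpr hdvd2)
  · -- b' ≡ b
    calc b0 + d' * t ≡ b0 + (b - b0) [ZMOD n] := (Int.ModEq.refl b0).add h1
      _ = b := by ring
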